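/- Suppose φ : D → [0,∞) is such that φ_{n,k} := sup_{Q_{n,k}} φ satisfies: sup over all families A of pairwise disjoint dyadic arcs {I_{n,k}}_{(n,k)∈A} of Σ_{(n,k)∈A} φ_{n,k} σ(I_{n,k}) is finite. Then φ admits a positive harmonic majorant on D. -/

import Mathlib

open MeasureTheory Set
open scoped Real ENNReal

noncomputable section

def unitDisc : Set ℂ := Metric.ball 0 1
def unitCircle : Set ℂ := Metric.sphere 0 1

/-- The Poisson kernel of the unit disc. -/
def poissonK (z ζ : ℂ) : ℝ := (1 - ‖z‖ ^ 2) / ‖ζ - z‖ ^ 2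

/-- The Laplacian of a function `h : ℂ → ℝ`, viewing `ℂ` as `ℝ²`. -/
def lap (h : ℂ → ℝ) (z : ℂ) : ℝ :=
  iteratedFDeriv ℝ 2 h z ![1, 1] + iteratedFDeriv ℝ 2 h z ![Complex.I, Complex.I]

/-- `h` is harmonic on the open unit disc. -/
def HarmonicOnDisc (h : ℂ → ℝ) : Prop :=
  ContDiffOn ℝ 2 h unitDisc ∧ ∀ z ∈ unitDisc, lap h z = 0

/-- Angles of the dyadic arc `I_{n,k}`. -/
def arcAngles (n k : ℕ) : Set ℝ :=
  Ico (2 * π * k / 2 ^ n) (2 * π * (k + 1) / 2 ^ n)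

/-- The dyadic Whitney square `Q_{n,k}`. -/
def whitney (n k : ℕ) : Set ℂ :=
  {z : ℂ | ∃ r θ : ℝ, θ ∈ arcAngles n k ∧
    r ∈ Ico (1 - (2 : ℝ) ^ (-(n : ℝ))) (1 - (2 : ℝ) ^ (-(n : ℝ) - 1)) ∧
    z = (r : ℂ) * Complex.exp (θ * Complex.I)}

/-- `sup_{Q_{n,k}} φ`, with values in `[0,∞]`. -/
def supWhitney (φ : ℂ → ℝ) (n k : ℕ) : ℝ≥0∞ :=
  ⨆ z ∈ whitney n k, ENNReal.ofReal (φ z)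

namespace HMaj

/-- weight `φ_{n,k} σ(I_{n,k})`. -/
def wt (φ : ℂ → ℝ) (p : ℕ × ℕ) : ℝ≥0∞ :=
  supWhitney φ p.1 p.2 * ENNReal.ofReal ((2 : ℝ) ^ (-(p.1 : ℝ)))

def arcLB (p : ℕ × ℕ) : ℝ := 2 * π * p.2 / 2 ^ p.1
def arcUB (p : ℕ × ℕ) : ℝ := 2 * π * (p.2 + 1) / 2 ^ p.1

lemma arcLB_lt_arcUB (p : ℕ × ℕ) : arcLB p < arcUB p := by
  have h1 : (0:ℝ) < 2 ^ p.1 := by positivity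
  have h2 := Real.pi_pos
  unfold arcLB arcUB
  apply div_lt_div_of_pos_right ?_ h1
  nlinarith [Nat.cast_nonneg (α := ℝ) p.2]

lemma arcAngles_eq (n k : ℕ) : arcAngles n k = Ico (arcLB (n,k)) (arcUB (n,k)) := rfl

/-- The valid families: arcs with `k < 2^n`, contained in `[0,x)`, pairwise disjoint. -/
def Valid (x : ℝ) (A : Finset (ℕ × ℕ)) : Prop :=
  (∀ p ∈ A, p.2 < 2 ^ p.1 ∧ arcUB p ≤ x) ∧
  ((A : Set (ℕ × ℕ)).Pairwise fun p q =>
    Disjoint (arcAngles p.1 p.2) (arcAngles q.1 q.2))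

def G (φ : ℂ → ℝ) (x : ℝ) : ℝ≥0∞ :=
  ⨆ (A : Finset (ℕ × ℕ)) (_ : Valid x A), ∑ p ∈ A, wt φ p

def F (φ : ℂ → ℝ) (x : ℝ) : ℝ := (G φ x).toReal



section
variable (φ : ℂ → ℝ) {C : ℝ}

lemma arc_nonempty (p : ℕ × ℕ) : (arcAngles p.1 p.2).Nonempty :=
  nonempty_Ico.mpr (arcLB_lt_arcUB p)

lemma arc_subset_Iio {p : ℕ × ℕ} {x : ℝ} (h : arcUB p ≤ x) :
    arcAngles p.1 p.2 ⊆ Iio x := fun t ht => lt_of_lt_of_le ht.2 h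

lemma arc_subset_Ici {p : ℕ × ℕ} {x : ℝ} (h : x ≤ arcLB p) :
    arcAngles p.1 p.2 ⊆ Ici x := fun t ht => le_trans h ht.1

lemma G_le (hC : ∀ A : Finset (ℕ × ℕ), (∀ p ∈ A, p.2 < 2 ^ p.1) →
      ((A : Set (ℕ × ℕ)).Pairwise fun p q =>
        Disjoint (arcAngles p.1 p.2) (arcAngles q.1 q.2)) →
      ∑ p ∈ A, wt φ p ≤ ENNReal.ofReal C) (x : ℝ) :
    G φ x ≤ ENNReal.ofReal C := by
  refine iSup_le fun A => iSup_le fun hA => ?_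
  exact hC A (fun p hp => (hA.1 p hp).1) hA.2

lemma G_ne_top (hC : ∀ A : Finset (ℕ × ℕ), (∀ p ∈ A, p.2 < 2 ^ p.1) →
      ((A : Set (ℕ × ℕ)).Pairwise fun p q =>
        Disjoint (arcAngles p.1 p.2) (arcAngles q.1 q.2)) →
      ∑ p ∈ A, wt φ p ≤ ENNReal.ofReal C) (x : ℝ) : G φ x ≠ ⊤ :=
  ne_top_of_le_ne_top ENNReal.ofReal_ne_top (G_le φ hC x)

lemma G_mono : Monotone (G φ) := by
  intro x y hxy
  refine iSup_le fun A => iSup_le fun hA => ?_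
  exact le_iSup₂_of_le A ⟨fun p hp => ⟨(hA.1 p hp).1, (hA.1 p hp).2.trans hxy⟩, hA.2⟩ le_rfl

lemma F_mono (hC : ∀ A : Finset (ℕ × ℕ), (∀ p ∈ A, p.2 < 2 ^ p.1) →
      ((A : Set (ℕ × ℕ)).Pairwise fun p q =>
        Disjoint (arcAngles p.1 p.2) (arcAngles q.1 q.2)) →
      ∑ p ∈ A, wt φ p ≤ ENNReal.ofReal C) : Monotone (F φ) :=
  fun x y hxy => ENNReal.toReal_mono (G_ne_top φ hC y) (G_mono φ hxy)

/-- Key superadditivity: inserting a fresh arc to the right. -/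
lemma G_add_le {x y : ℝ} {p : ℕ × ℕ} (hp : p.2 < 2 ^ p.1)
    (hx : x ≤ arcLB p) (hy : arcUB p ≤ y) :
    G φ x + wt φ p ≤ G φ y := by
  have hxy : x ≤ y := hx.trans ((arcLB_lt_arcUB p).le.trans hy)
  have hsingle : wt φ p ≤ G φ y := by
    refine le_iSup₂_of_le {p} ?_ ?_
    · constructor
      · intro q hq; rw [Finset.mem_singleton] at hq; subst hq; exact ⟨hp, hy⟩
      · simp [Set.pairwise_singleton]
    · simp
  rw [G, ENNReal.iSup_add]
  refine iSup_le fun A => ?_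
  by_cases hA : Valid x A
  · rw [ciSup_pos hA]
    have hpA : p ∉ A := by
      intro hmem
      have h1 := (hA.1 p hmem).2
      have := arcLB_lt_arcUB p
      linarith
    have hins : Valid y (insert p A) := by
      constructor
      · intro q hq
        rcases Finset.mem_insert.mp hq with rfl | hq'
        · exact ⟨hp, hy⟩
        · exact ⟨(hA.1 q hq').1, (hA.1 q hq').2.trans hxy⟩
      · rw [Finset.coe_insert]
        refine Set.Pairwise.insert hA.2 fun q hq hne => ?_
        have hd : Disjoint (arcAngles q.1 q.2) (arcAngles p.1 p.2) := by
          refine Disjoint.mono (arc_subset_Iio (hA.1 q hq).2) (arc_subset_Ici hx) ?_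
          exact Iio_disjoint_Ici le_rfl
        exact ⟨hd.symm, hd⟩
    calc ∑ q ∈ A, wt φ q + wt φ p = ∑ q ∈ insert p A, wt φ q := by
          rw [Finset.sum_insert hpA, add_comm]
      _ ≤ G φ y := le_iSup₂_of_le (insert p A) hins le_rfl
  · simp only [hA, iSup_false]
    simpa using hsingle

end

section
variable (φ : ℂ → ℝ) {C : ℝ}

def Bdd (φ : ℂ → ℝ) (C : ℝ) : Prop := ∀ A : Finset (ℕ × ℕ), (∀ p ∈ A, p.2 < 2 ^ p.1) →
      ((A : Set (ℕ × ℕ)).Pairwise fun p q =>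
        Disjoint (arcAngles p.1 p.2) (arcAngles q.1 q.2)) →
      ∑ p ∈ A, wt φ p ≤ ENNReal.ofReal C

lemma F_nonneg (x : ℝ) : 0 ≤ F φ x := ENNReal.toReal_nonneg

lemma F_diff_ge (hC : Bdd φ C) {p : ℕ × ℕ} (hp : p.2 < 2 ^ p.1) :
    F φ (arcLB p) + (wt φ p).toReal ≤ F φ (arcUB p) := by
  have h := G_add_le φ hp (le_refl (arcLB p)) (le_refl (arcUB p))
  have h1 := G_ne_top φ hC (arcLB p)
  have h2 := G_ne_top φ hC (arcUB p)
  have h3 : wt φ p ≠ ⊤ := ne_top_of_le_ne_top h2 (le_trans le_add_self h)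
  rw [F, F, ← ENNReal.toReal_add h1 h3]
  exact ENNReal.toReal_mono h2 h

lemma F_eq_zero (x : ℝ) (hx : x ≤ 0) : F φ x = 0 := by
  rw [F, G]
  have : ∀ A : Finset (ℕ × ℕ), Valid x A → A = ∅ := by
    intro A hA
    by_contra hne
    obtain ⟨p, hp⟩ := Finset.nonempty_of_ne_empty hne
    have h1 := (hA.1 p hp).2
    have h0 : (0:ℝ) ≤ arcLB p := by
      rw [arcLB]; positivity
    have h2 : 0 < arcUB p := lt_of_le_of_lt h0 (arcLB_lt_arcUB p)
    linarith
  have : (⨆ (A : Finset (ℕ × ℕ)) (_ : Valid x A), ∑ p ∈ A, wt φ p) = 0 := by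
    refine le_antisymm (iSup_le fun A => iSup_le fun hA => ?_) (zero_le)
    rw [this A hA]; simp
  rw [this]; simp

lemma arcUB_le_two_pi {p : ℕ × ℕ} (hp : p.2 < 2 ^ p.1) : arcUB p ≤ 2 * π := by
  rw [arcUB, div_le_iff₀ (by positivity : (0:ℝ) < 2 ^ p.1)]
  have h2 : (p.2 : ℝ) + 1 ≤ 2 ^ p.1 := by exact_mod_cast Nat.succ_le_of_lt hp
  nlinarith [Real.pi_pos]

lemma F_const_ge (x : ℝ) (hx : 2 * π ≤ x) : F φ x = F φ (2 * π) := by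
  rw [F, F, G, G]
  congr 1
  apply le_antisymm
  · refine iSup_le fun A => iSup_le fun hA => ?_
    refine le_iSup₂_of_le A ⟨fun p hp => ⟨(hA.1 p hp).1, arcUB_le_two_pi (hA.1 p hp).1⟩, hA.2⟩ le_rfl
  · exact G_mono φ hx

end

section
variable {φ : ℂ → ℝ} {C : ℝ}

def sf (hC : Bdd φ C) : StieltjesFunction ℝ := (F_mono φ hC).stieltjesFunction

lemma sf_eq (hC : Bdd φ C) (x : ℝ) : sf hC x = Function.rightLim (F φ) x :=
  (F_mono φ hC).stieltjesFunction_eq x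

def nu (hC : Bdd φ C) : Measure ℝ := (sf hC).measure

lemma nu_Icc_ge (hC : Bdd φ C) {p : ℕ × ℕ} (hp : p.2 < 2 ^ p.1) :
    ENNReal.ofReal ((wt φ p).toReal) ≤ nu hC (Icc (arcLB p) (arcUB p)) := by
  rw [nu, StieltjesFunction.measure_Icc]
  apply ENNReal.ofReal_le_ofReal
  have h1 : F φ (arcUB p) ≤ sf hC (arcUB p) := by
    rw [sf_eq]; exact (F_mono φ hC).le_rightLim le_rfl
  have h2 : Function.leftLim (sf hC) (arcLB p) ≤ F φ (arcLB p) := by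
    refine le_of_tendsto ((sf hC).mono.tendsto_leftLim (arcLB p)) ?_
    filter_upwards [self_mem_nhdsWithin] with y hy
    rw [sf_eq]
    exact (F_mono φ hC).rightLim_le hy
  have h3 := F_diff_ge φ hC hp
  linarith

lemma sf_neg (hC : Bdd φ C) {x : ℝ} (hx : x < 0) : sf hC x = 0 := by
  rw [sf_eq]
  refine le_antisymm ?_ ?_
  · calc Function.rightLim (F φ) x ≤ F φ (x/2) := (F_mono φ hC).rightLim_le (by linarith)
      _ = 0 := F_eq_zero φ _ (by linarith)
  · calc (0:ℝ) ≤ F φ x := F_nonneg φ x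
      _ ≤ Function.rightLim (F φ) x := (F_mono φ hC).le_rightLim le_rfl

lemma sf_large (hC : Bdd φ C) {x : ℝ} (hx : 2 * π < x) : sf hC x = F φ (2 * π) := by
  rw [sf_eq]
  refine le_antisymm ?_ ?_
  · calc Function.rightLim (F φ) x ≤ F φ (x+1) := (F_mono φ hC).rightLim_le (by linarith)
      _ = F φ (2*π) := F_const_ge φ _ (by linarith)
  · calc F φ (2*π) = F φ x := (F_const_ge φ x hx.le).symm
      _ ≤ Function.rightLim (F φ) x := (F_mono φ hC).le_rightLim le_rfl

lemma nu_univ (hC : Bdd φ C) : nu hC univ = ENNReal.ofReal (F φ (2 * π)) := by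
  rw [nu]
  rw [StieltjesFunction.measure_univ (l := 0) (u := F φ (2 * π))]
  · simp
  · apply Filter.Tendsto.congr' _ tendsto_const_nhds
    filter_upwards [Filter.Iio_mem_atBot 0] with y hy
    exact (sf_neg hC hy).symm
  · apply Filter.Tendsto.congr' _ tendsto_const_nhds
    filter_upwards [Filter.Ioi_mem_atTop (2*π)] with y hy
    exact (sf_large hC hy).symm

instance nu_finite (hC : Bdd φ C) : IsFiniteMeasure (nu hC) :=
  ⟨by rw [nu_univ hC]; exact ENNReal.ofReal_lt_top⟩

end

section Harm
open Complex

def TRe : ℂ →L[ℝ] ℂ →L[ℝ] ℝ :=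
  (ContinuousLinearMap.compL ℝ ℂ ℂ ℝ Complex.reCLM).comp (ContinuousLinearMap.mul ℝ ℂ)

@[simp] lemma TRe_apply (c v : ℂ) : TRe c v = (c * v).re := rfl

lemma hasFDerivAt_re_comp {F : ℂ → ℂ} {w : ℂ} (hd : HasDerivAt F (deriv F w) w) :
    HasFDerivAt (fun y => (F y).re) (TRe (deriv F w)) w := by
  have h1 : HasFDerivAt F
      ((ContinuousLinearMap.smulRight (1 : ℂ →L[ℂ] ℂ) (deriv F w)).restrictScalars ℝ) w :=
    (hd.hasFDerivAt).restrictScalars ℝ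
  have h2 := (Complex.reCLM.hasFDerivAt (x := F w)).comp w h1
  have h3 : Complex.reCLM.comp
      ((ContinuousLinearMap.smulRight (1 : ℂ →L[ℂ] ℂ) (deriv F w)).restrictScalars ℝ)
      = TRe (deriv F w) := by
    ext v
    simp [mul_comm]
  rw [h3] at h2
  exact h2

lemma contDiffOn_re_of_diff {Fc : ℂ → ℂ} {s : Set ℂ} (hs : IsOpen s)
    (hF : DifferentiableOn ℂ Fc s) : ContDiffOn ℝ 2 (fun z => (Fc z).re) s := by
  have hA : AnalyticOnNhd ℂ Fc s := hF.analyticOnNhd hs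
  have h1 : ContDiffOn ℂ 2 Fc s := hA.contDiffOn_of_completeSpace
  have h2 : ContDiffOn ℝ 2 Fc s := h1.restrict_scalars ℝ
  exact Complex.reCLM.contDiff.comp_contDiffOn h2

lemma lap_re_eq_zero {Fc : ℂ → ℂ} {s : Set ℂ} (hs : IsOpen s)
    (hF : DifferentiableOn ℂ Fc s) {z : ℂ} (hz : z ∈ s) :
    iteratedFDeriv ℝ 2 (fun w => (Fc w).re) z ![1, 1]
      + iteratedFDeriv ℝ 2 (fun w => (Fc w).re) z ![Complex.I, Complex.I] = 0 := by
  have hA : AnalyticOnNhd ℂ Fc s := hF.analyticOnNhd hs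
  have hg : AnalyticOnNhd ℂ (deriv Fc) s := hA.deriv
  have key : ∀ w ∈ s, HasFDerivAt (fun y => (Fc y).re) (TRe (deriv Fc w)) w := by
    intro w hw
    exact hasFDerivAt_re_comp ((hA w hw).differentiableAt.hasDerivAt)
  -- second derivative
  have hd2 : HasDerivAt (deriv Fc) (deriv (deriv Fc) z) z :=
    (hg z hz).differentiableAt.hasDerivAt
  have hL2 : HasFDerivAt (deriv Fc)
      ((ContinuousLinearMap.smulRight (1 : ℂ →L[ℂ] ℂ) (deriv (deriv Fc) z)).restrictScalars ℝ) z :=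
    (hd2.hasFDerivAt).restrictScalars ℝ
  have hcomp : HasFDerivAt (fun w => TRe (deriv Fc w))
      (TRe.comp ((ContinuousLinearMap.smulRight (1 : ℂ →L[ℂ] ℂ)
        (deriv (deriv Fc) z)).restrictScalars ℝ)) z :=
    (TRe.hasFDerivAt).comp z hL2
  have hev : fderiv ℝ (fun y => (Fc y).re) =ᶠ[nhds z] fun w => TRe (deriv Fc w) := by
    filter_upwards [hs.mem_nhds hz] with w hw
    exact (key w hw).fderiv
  have h2d : fderiv ℝ (fderiv ℝ (fun y => (Fc y).re)) z
      = TRe.comp ((ContinuousLinearMap.smulRight (1 : ℂ →L[ℂ] ℂ)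
        (deriv (deriv Fc) z)).restrictScalars ℝ) := by
    rw [hev.fderiv_eq]
    exact hcomp.fderiv
  rw [iteratedFDeriv_two_apply, iteratedFDeriv_two_apply, h2d]
  simp only [ContinuousLinearMap.comp_apply, ContinuousLinearMap.coe_restrictScalars',
    ContinuousLinearMap.smulRight_apply, ContinuousLinearMap.one_apply, TRe_apply,
    Matrix.cons_val_zero, Matrix.cons_val_one, Matrix.head_cons, smul_eq_mul]
  set d := deriv (deriv Fc) z
  have h4 : (1:ℂ) * d * 1 + I * d * I = 0 := by
    linear_combination d * Complex.I_sq
  rw [← Complex.add_re, h4, Complex.zero_re]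

end Harm

section Poisson
open Complex

def pK (z ζ : ℂ) : ℝ := (1 - ‖z‖ ^ 2) / ‖ζ - z‖ ^ 2

lemma norm_exp_mul_I_sub (s t : ℝ) :
    ‖Complex.exp (s * I) - Complex.exp (t * I)‖ ≤ |s - t| := by
  have hder : ∀ x : ℝ, HasDerivAt (fun y : ℝ => Complex.exp (y * I))
      (Complex.exp (x * I) * I) x := by
    intro x
    have h1 : HasDerivAt (fun w : ℂ => Complex.exp (w * I)) (Complex.exp ((x:ℂ) * I) * I) (x:ℂ) := by
      simpa using ((hasDerivAt_id (x:ℂ)).mul_const I).cexp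
    exact h1.comp_ofReal
  have hb : ∀ x ∈ (univ : Set ℝ), ‖Complex.exp (x * I) * I‖ ≤ 1 := by
    intro x _
    rw [norm_mul, Complex.norm_I,
      Complex.norm_exp_ofReal_mul_I]
    norm_num
  have := convex_univ.norm_image_sub_le_of_norm_hasDerivWithin_le
    (fun x _ => (hder x).hasDerivWithinAt) hb (mem_univ t) (mem_univ s)
  simpa [Real.norm_eq_abs] using this

lemma re_poisson (z w : ℂ) (hw : ‖w‖ = 1) (hzw : w ≠ z) :
    ((w + z) / (w - z)).re = pK z w := by
  have hsub : w - z ≠ 0 := sub_ne_zero.mpr hzw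
  have hw1 : w.re * w.re + w.im * w.im = 1 := by
    have h := Complex.normSq_eq_norm_sq w
    rw [hw] at h
    simpa [Complex.normSq_apply] using h
  have hz2 : ‖z‖ ^ 2 = z.re * z.re + z.im * z.im := by
    rw [Complex.sq_norm, Complex.normSq_apply]
  have hden : Complex.normSq (w - z) = ‖w - z‖ ^ 2 := by
    rw [Complex.sq_norm]
  rw [pK, Complex.div_re, hden, ← add_div, hz2]
  congr 1
  simp only [Complex.add_re, Complex.sub_re, Complex.add_im, Complex.sub_im]
  nlinarith [hw1]

lemma pK_nonneg {z : ℂ} (hz : ‖z‖ < 1) (ζ : ℂ) : 0 ≤ pK z ζ := by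
  apply div_nonneg
  · nlinarith [norm_nonneg z]
  · positivity

lemma norm_integrand_le {z w : ℂ} (hz : ‖z‖ < 1) (hw : ‖w‖ = 1) :
    ‖(w + z) / (w - z)‖ ≤ 2 / (1 - ‖z‖) := by
  rw [norm_div]
  have h1 : ‖w + z‖ ≤ 2 := by
    calc ‖w + z‖ ≤ ‖w‖ + ‖z‖ := norm_add_le w z
      _ ≤ 2 := by rw [hw]; linarith
  have h2 : 1 - ‖z‖ ≤ ‖w - z‖ := by
    have := norm_sub_norm_le w z
    rw [hw] at this
    linarith [this]
  have h3 : 0 < 1 - ‖z‖ := by linarith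
  exact div_le_div₀ (by norm_num) h1 h3 h2

end Poisson

section Whit
open Complex

lemma two_rpow_neg_nat (n : ℕ) : (2:ℝ) ^ (-(n:ℝ)) = ((2:ℝ)^n)⁻¹ := by
  rw [Real.rpow_neg (by norm_num), Real.rpow_natCast]

lemma two_rpow_neg_nat' (n : ℕ) : (2:ℝ) ^ (-(n:ℝ) - 1) = (2 * (2:ℝ)^n)⁻¹ := by
  rw [show -(n:ℝ) - 1 = -((n:ℝ)+1) by ring, Real.rpow_neg (by norm_num),
    Real.rpow_add (by norm_num), Real.rpow_natCast, Real.rpow_one, mul_comm]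

lemma pK_lower {n k : ℕ} {z : ℂ} (hz : z ∈ whitney n k) {t : ℝ}
    (ht : t ∈ Icc (arcLB (n,k)) (arcUB (n,k))) :
    (2:ℝ)^n / 128 ≤ pK z (Complex.exp (t * I)) := by
  obtain ⟨r, θ, hθ, hr, rfl⟩ := hz
  rw [two_rpow_neg_nat, two_rpow_neg_nat'] at hr
  have hP : (0:ℝ) < 2 ^ n := by positivity
  have hrange : ((2:ℝ)^n)⁻¹ ≤ 1 := by
    rw [inv_le_one_iff₀]; right; exact_mod_cast Nat.one_le_two_pow
  have hr0 : 0 ≤ r := le_trans (by linarith [hr.1]) hr.1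
  have hr1 : r < 1 := lt_of_lt_of_le hr.2 (by
    have : (0:ℝ) < (2 * 2^n)⁻¹ := by positivity
    linarith)
  have hnz : ‖(r : ℂ) * Complex.exp (θ * I)‖ = r := by
    rw [norm_mul, Complex.norm_exp_ofReal_mul_I,
      Complex.norm_real, Real.norm_eq_abs, _root_.abs_of_nonneg hr0, mul_one]
  set z := (r : ℂ) * Complex.exp (θ * I) with hzdef
  set w := Complex.exp (t * I) with hwdef
  -- distance bound
  have harc : arcUB (n,k) - arcLB (n,k) = 2 * π / 2 ^ n := by
    rw [arcUB, arcLB]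
    push_cast
    field_simp
    ring
  have hθ' : θ ∈ Icc (arcLB (n,k)) (arcUB (n,k)) := ⟨hθ.1, hθ.2.le⟩
  have habs : |t - θ| ≤ 2 * π / 2 ^ n := by
    rw [abs_sub_le_iff]
    constructor <;> [skip; skip] <;>
      (first | (have h1 := ht.1; have h2 := ht.2; have h3 := hθ'.1; have h4 := hθ'.2; linarith))
  have hd1 : ‖w - Complex.exp (θ * I)‖ ≤ 2 * π / 2 ^ n := le_trans (norm_exp_mul_I_sub t θ) habs
  have hd2 : ‖Complex.exp (θ * I) - z‖ = 1 - r := by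
    have : Complex.exp (θ * I) - z = (1 - (r:ℂ)) * Complex.exp (θ * I) := by
      rw [hzdef]; ring
    rw [this, norm_mul, Complex.norm_exp_ofReal_mul_I, mul_one]
    rw [show (1 - (r:ℂ)) = ((1 - r : ℝ) : ℂ) by push_cast; ring]
    rw [Complex.norm_real, Real.norm_eq_abs, _root_.abs_of_nonneg (by linarith)]
  have hdist : ‖w - z‖ ≤ 8 / 2 ^ n := by
    have h7 : 2 * π ≤ 7 := by nlinarith [Real.pi_lt_d2]
    calc ‖w - z‖ ≤ ‖w - Complex.exp (θ * I)‖ + ‖Complex.exp (θ * I) - z‖ := by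
          simpa using norm_sub_le_norm_sub_add_norm_sub w (Complex.exp (θ * I)) z
      _ ≤ 2 * π / 2 ^ n + (1 - r) := by
          refine add_le_add hd1 ?_
          rw [hd2]
      _ ≤ 7 / 2 ^ n + 1 / 2 ^ n := by
          have h8 : 1 - r ≤ ((2:ℝ)^n)⁻¹ := by linarith [hr.1]
          have h9 : 2 * π / 2^n ≤ 7 / 2^n := by gcongr
          have h10 : 1 - r ≤ 1 / 2^n := by rw [one_div]; exact h8
          linarith
      _ = 8 / 2 ^ n := by ring
  have hnumer : (2 * (2:ℝ)^n)⁻¹ ≤ 1 - ‖z‖ ^ 2 := by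
    rw [hnz]
    nlinarith [hr.2, hr0, hr1]
  have hwz : (0:ℝ) < ‖w - z‖ := by
    have hnw : ‖w‖ = 1 := by
      rw [hwdef, Complex.norm_exp_ofReal_mul_I]
    have : 1 - r ≤ ‖w - z‖ := by
      have := norm_sub_norm_le w z
      rw [hnw, hnz] at this
      linarith
    linarith
  rw [pK, le_div_iff₀ (by positivity)]
  have hsq : ‖w - z‖ ^ 2 ≤ (8 / 2^n) ^ 2 := by
    apply pow_le_pow_left₀ (norm_nonneg _) hdist
  have h64 : (8 / (2:ℝ)^n) ^ 2 = 64 / ((2:ℝ)^n)^2 := by ring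
  rw [h64] at hsq
  calc (2:ℝ)^n / 128 * ‖w - z‖^2 ≤ (2:ℝ)^n / 128 * (64 / ((2:ℝ)^n)^2) := by
        apply mul_le_mul_of_nonneg_left hsq (by positivity)
    _ = (2 * (2:ℝ)^n)⁻¹ := by field_simp; ring
    _ ≤ 1 - ‖z‖^2 := hnumer

end Whit

section Cover
open Complex

lemma whitney_norm_lt {n k : ℕ} {z : ℂ} (hz : z ∈ whitney n k) : ‖z‖ < 1 := by
  obtain ⟨r, θ, hθ, hr, rfl⟩ := hz
  rw [two_rpow_neg_nat, two_rpow_neg_nat'] at hr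
  have hP : (0:ℝ) < 2 ^ n := by positivity
  have hrange : ((2:ℝ)^n)⁻¹ ≤ 1 := by
    rw [inv_le_one_iff₀]; right; exact_mod_cast Nat.one_le_two_pow
  have hr0 : 0 ≤ r := le_trans (by linarith [hr.1]) hr.1
  have hr1 : r < 1 := lt_of_lt_of_le hr.2 (by
    have : (0:ℝ) < (2 * 2^n)⁻¹ := by positivity
    linarith)
  rw [norm_mul, Complex.norm_exp_ofReal_mul_I,
    Complex.norm_real, Real.norm_eq_abs, _root_.abs_of_nonneg hr0, mul_one]
  exact hr1

lemma exists_whitney_mem {z : ℂ} (hz : z ∈ unitDisc) : ∃ n k, k < 2 ^ n ∧ z ∈ whitney n k := by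
  have hr1 : ‖z‖ < 1 := by simpa [unitDisc, Metric.mem_ball] using hz
  have hr0 : 0 ≤ ‖z‖ := norm_nonneg z
  set r := ‖z‖ with hrdef
  have hu0 : 0 < 1 - r := by linarith
  have hex : ∃ m : ℕ, ((1:ℝ)/2)^m < 1 - r := exists_pow_lt_of_lt_one hu0 (by norm_num)
  have hm₀ : ((1:ℝ)/2)^(Nat.find hex) < 1 - r := Nat.find_spec hex
  have hm₀ne : Nat.find hex ≠ 0 := by
    intro h0
    rw [h0] at hm₀; norm_num at hm₀; linarith
  obtain ⟨n, hn⟩ : ∃ n, Nat.find hex = n + 1 := ⟨Nat.find hex - 1, by omega⟩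
  rw [hn] at hm₀
  have hnot : ¬ ((1:ℝ)/2)^n < 1 - r := Nat.find_min hex (by omega)
  push_neg at hnot
  have e1 : ((1:ℝ)/2)^n = ((2:ℝ)^n)⁻¹ := by rw [one_div, inv_pow]
  have e2 : ((1:ℝ)/2)^(n+1) = (2 * (2:ℝ)^n)⁻¹ := by
    rw [one_div, inv_pow, pow_succ, mul_comm]
  rw [e1] at hnot; rw [e2] at hm₀
  -- angle
  set θ₀ := Complex.arg z with hθ₀def
  set θ := if 0 ≤ θ₀ then θ₀ else θ₀ + 2*π with hθdef
  have hpi := Real.pi_pos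
  have hθ0 : 0 ≤ θ := by
    rw [hθdef]; split_ifs with h
    · exact h
    · have := Complex.neg_pi_lt_arg z; push_neg at h; nlinarith
  have hθlt : θ < 2*π := by
    rw [hθdef]; split_ifs with h
    · nlinarith [Complex.arg_le_pi z]
    · push_neg at h; linarith
  have hzeq : z = (r:ℂ) * Complex.exp (θ * I) := by
    have habs : ((r:ℝ):ℂ) * Complex.exp (θ₀ * I) = z := by
      have := Complex.norm_mul_exp_arg_mul_I z
      rw [hrdef]
      exact this
    rw [hθdef]
    split_ifs with h
    · exact habs.symm
    · have hper : Complex.exp (((θ₀ + 2*π : ℝ) : ℂ) * I) = Complex.exp (θ₀ * I) := by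
        rw [show ((θ₀ + 2*π : ℝ):ℂ) * I = θ₀*I + 2*π*I by push_cast; ring,
          Complex.exp_add, Complex.exp_two_pi_mul_I, mul_one]
      rw [show ((θ₀ + 2*π : ℝ):ℂ) = (θ₀:ℂ) + 2*π by push_cast; ring] at hper
      rw [show ((θ₀:ℂ) + 2*π) = ((θ₀ + 2*π : ℝ):ℂ) by push_cast; ring] at hper
      rw [hper]
      exact habs.symm
  -- choose k
  have hL : (0:ℝ) < 2*π/2^n := by positivity
  set k := Nat.floor (θ / (2*π/2^n)) with hkdef
  have hdiv0 : 0 ≤ θ / (2*π/2^n) := by positivity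
  have hfl : (k:ℝ) ≤ θ / (2*π/2^n) := Nat.floor_le hdiv0
  have hfu : θ / (2*π/2^n) < (k:ℝ) + 1 := Nat.lt_floor_add_one _
  have hk1 : (k:ℝ) * (2*π/2^n) ≤ θ := (le_div_iff₀ hL).mp hfl
  have hk2 : θ < ((k:ℝ) + 1) * (2*π/2^n) := (div_lt_iff₀ hL).mp hfu
  have hklt : k < 2^n := by
    have : θ / (2*π/2^n) < (2:ℝ)^n := by
      rw [div_lt_iff₀ hL]
      calc θ < 2*π := hθlt
        _ = (2:ℝ)^n * (2*π/2^n) := by field_simp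
    have h2 : (k:ℝ) < (2:ℝ)^n := lt_of_le_of_lt hfl this
    exact_mod_cast h2
  refine ⟨n, k, hklt, r, θ, ?_, ?_, hzeq⟩
  · constructor
    · calc 2*π*k/2^n = (k:ℝ) * (2*π/2^n) := by ring
        _ ≤ θ := hk1
    · calc θ < ((k:ℝ)+1) * (2*π/2^n) := hk2
        _ = 2*π*((k:ℝ)+1)/2^n := by ring
  · rw [two_rpow_neg_nat, two_rpow_neg_nat']
    constructor
    · linarith
    · linarith

end Cover

section Integral
open Complex MeasureTheory

lemma norm_exp_tI (t : ℝ) : ‖Complex.exp (t * I)‖ = 1 := by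
  rw [Complex.norm_exp_ofReal_mul_I]

lemma exp_sub_ne {t : ℝ} {z : ℂ} (hz : ‖z‖ < 1) : Complex.exp (t * I) - z ≠ 0 := by
  intro h
  have h2 : Complex.exp (t * I) = z := by linear_combination h
  rw [← h2, norm_exp_tI] at hz
  linarith

lemma cont_integrand {z : ℂ} (hz : ‖z‖ < 1) :
    Continuous fun t : ℝ => (Complex.exp (t*I) + z) / (Complex.exp (t*I) - z) := by
  have hc : Continuous fun t : ℝ => Complex.exp (t * I) :=
    Complex.continuous_exp.comp (Complex.continuous_ofReal.mul continuous_const)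
  exact (hc.add continuous_const).div (hc.sub continuous_const) fun t => exp_sub_ne hz

lemma integrable_integrand (μ : Measure ℝ) [IsFiniteMeasure μ] {z : ℂ} (hz : ‖z‖ < 1) :
    Integrable (fun t : ℝ => (Complex.exp (t*I) + z) / (Complex.exp (t*I) - z)) μ := by
  refine Integrable.mono' (integrable_const (2 / (1 - ‖z‖)))
    (cont_integrand hz).aestronglyMeasurable ?_
  filter_upwards with t
  exact norm_integrand_le hz (norm_exp_tI t)

def HcInt (μ : Measure ℝ) : ℂ → ℂ :=
  fun z => ∫ t, (Complex.exp (t*I) + z) / (Complex.exp (t*I) - z) ∂μ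

lemma integrand_hasDerivAt {t : ℝ} {z : ℂ} (hz : ‖z‖ < 1) :
    HasDerivAt (fun z : ℂ => (Complex.exp (t*I) + z) / (Complex.exp (t*I) - z))
      (2 * Complex.exp (t*I) / (Complex.exp (t*I) - z)^2) z := by
  set w := Complex.exp (t*I)
  have h1 : HasDerivAt (fun z : ℂ => w + z) 1 z := by
    simpa using (hasDerivAt_id z).const_add w
  have h2 : HasDerivAt (fun z : ℂ => w - z) (-1) z := by
    simpa using (hasDerivAt_id z).const_sub w
  have hne : w - z ≠ 0 := exp_sub_ne hz
  have := h1.div h2 hne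
  have e : 2 * w / (w - z) ^ 2 = (1 * (w - z) - (w + z) * -1) / (w - z) ^ 2 := by ring
  rw [e]
  exact this

lemma HcInt_hasDerivAt (μ : Measure ℝ) [IsFiniteMeasure μ] {z₀ : ℂ} (hz₀ : ‖z₀‖ < 1) :
    HasDerivAt (HcInt μ) (∫ t, 2 * Complex.exp (t*I) / (Complex.exp (t*I) - z₀)^2 ∂μ) z₀ := by
  set ε := (1 - ‖z₀‖) / 2 with hεdef
  have hε : 0 < ε := by
    rw [hεdef]; linarith
  have hball : ∀ z ∈ Metric.ball z₀ ε, ‖z‖ < 1 ∧ ε ≤ 1 - ‖z‖ := by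
    intro z hzb
    rw [Metric.mem_ball, dist_eq_norm] at hzb
    have : ‖z‖ ≤ ‖z₀‖ + ‖z - z₀‖ := by
      calc ‖z‖ = ‖z₀ + (z - z₀)‖ := by ring_nf
        _ ≤ ‖z₀‖ + ‖z - z₀‖ := norm_add_le _ _
    constructor <;> [nlinarith; nlinarith]
  have key := hasDerivAt_integral_of_dominated_loc_of_deriv_le (μ := μ)
    (F := fun (z : ℂ) (t : ℝ) => (Complex.exp (t*I) + z) / (Complex.exp (t*I) - z))
    (F' := fun (z : ℂ) (t : ℝ) => 2 * Complex.exp (t*I) / (Complex.exp (t*I) - z)^2)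
    (x₀ := z₀) (bound := fun _ => 2 / ε^2) (Metric.ball_mem_nhds z₀ hε) ?_ ?_ ?_ ?_ ?_ ?_
  · exact key.2
  · filter_upwards [Metric.ball_mem_nhds z₀ hε] with z hzb
    exact (cont_integrand (hball z hzb).1).aestronglyMeasurable
  · exact integrable_integrand μ hz₀
  · have hc : Continuous fun t : ℝ => Complex.exp (t * I) :=
      Complex.continuous_exp.comp (Complex.continuous_ofReal.mul continuous_const)
    exact ((((continuous_const.mul hc)).div ((hc.sub continuous_const).pow 2)
      fun t => pow_ne_zero 2 (exp_sub_ne hz₀))).aestronglyMeasurable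
  · filter_upwards with t z hzb
    obtain ⟨hz1, hz2⟩ := hball z hzb
    rw [norm_div, norm_mul, norm_exp_tI, norm_pow]
    have hwz : ε ≤ ‖Complex.exp (t*I) - z‖ := by
      have := norm_sub_norm_le (Complex.exp (t*I)) z
      rw [norm_exp_tI] at this
      linarith
    have h2 : ε^2 ≤ ‖Complex.exp (t*I) - z‖^2 := by
      apply pow_le_pow_left₀ hε.le hwz
    have hn2 : ‖(2:ℂ)‖ = 2 := by norm_num
    rw [hn2, mul_one]
    apply div_le_div₀ (by norm_num) le_rfl (by positivity) h2
  · exact integrable_const _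
  · filter_upwards with t z hzb
    exact integrand_hasDerivAt (hball z hzb).1

end Integral

section Final
open Complex MeasureTheory

lemma HcInt_diffOn (μ : Measure ℝ) [IsFiniteMeasure μ] :
    DifferentiableOn ℂ (HcInt μ) unitDisc := by
  intro z hz
  have hz1 : ‖z‖ < 1 := by simpa [unitDisc, Metric.mem_ball] using hz
  exact ((HcInt_hasDerivAt μ hz1).differentiableAt).differentiableWithinAt

lemma cont_pK {z : ℂ} (hz : ‖z‖ < 1) : Continuous fun t : ℝ => pK z (Complex.exp (t*I)) := by
  have hc : Continuous fun t : ℝ => Complex.exp (t * I) :=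
    Complex.continuous_exp.comp (Complex.continuous_ofReal.mul continuous_const)
  refine Continuous.div continuous_const (((hc.sub continuous_const).norm).pow 2) ?_
  intro t
  have h2 : 0 < ‖Complex.exp (t*I) - z‖ := norm_pos_iff.mpr (exp_sub_ne hz)
  positivity

lemma integrable_pK (μ : Measure ℝ) [IsFiniteMeasure μ] {z : ℂ} (hz : ‖z‖ < 1) :
    Integrable (fun t : ℝ => pK z (Complex.exp (t*I))) μ := by
  refine Integrable.congr (integrable_integrand μ hz).re ?_
  filter_upwards with t
  exact re_poisson z _ (norm_exp_tI t) fun h => exp_sub_ne hz (by rw [h]; ring)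

lemma HcInt_re (μ : Measure ℝ) [IsFiniteMeasure μ] {z : ℂ} (hz : ‖z‖ < 1) :
    (HcInt μ z).re = ∫ t, pK z (Complex.exp (t*I)) ∂μ := by
  rw [HcInt]
  have h1 := integral_re (μ := μ) (f := fun t : ℝ =>
    (Complex.exp (t*I) + z) / (Complex.exp (t*I) - z)) (integrable_integrand μ hz)
  simp only [RCLike.re_to_complex] at h1
  rw [← h1]
  apply integral_congr_ae
  filter_upwards with t
  exact re_poisson z _ (norm_exp_tI t) fun h => exp_sub_ne hz (by rw [h]; ring)

end Final

end HMaj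


theorem harmonic_majorant_of_disjoint_sum_condition (φ : ℂ → ℝ)
    (hpos : ∀ z ∈ unitDisc, 0 ≤ φ z)
    (hcond : ∃ C : ℝ, ∀ A : Finset (ℕ × ℕ), (∀ p ∈ A, p.2 < 2 ^ p.1) →
      ((A : Set (ℕ × ℕ)).Pairwise fun p q =>
        Disjoint (arcAngles p.1 p.2) (arcAngles q.1 q.2)) →
      ∑ p ∈ A, supWhitney φ p.1 p.2 * ENNReal.ofReal ((2 : ℝ) ^ (-(p.1 : ℝ))) ≤
        ENNReal.ofReal C) :
    ∃ h : ℂ → ℝ, HarmonicOnDisc h ∧ (∀ z ∈ unitDisc, 0 ≤ h z) ∧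
      ∀ z ∈ unitDisc, φ z ≤ h z := by
  classical
  obtain ⟨C, hC⟩ := hcond
  have hC' : HMaj.Bdd φ C := fun A h1 h2 => hC A h1 h2
  let μ := HMaj.nu hC'
  haveI : IsFiniteMeasure μ := HMaj.nu_finite hC'
  have hopen : IsOpen unitDisc := Metric.isOpen_ball
  set Fc : ℂ → ℂ := fun z => (128 : ℂ) * HMaj.HcInt μ z with hFcdef
  have hdiff : DifferentiableOn ℂ Fc unitDisc :=
    (HMaj.HcInt_diffOn μ).const_mul (128 : ℂ)
  have hre : ∀ z ∈ unitDisc, (Fc z).re = 128 * ∫ t, HMaj.pK z (Complex.exp (t * Complex.I)) ∂μ := by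
    intro z hz
    have hz1 : ‖z‖ < 1 := by simpa [unitDisc, Metric.mem_ball] using hz
    rw [hFcdef]
    simp only [Complex.mul_re]
    rw [HMaj.HcInt_re μ hz1]
    norm_num
  refine ⟨fun z => (Fc z).re, ⟨HMaj.contDiffOn_re_of_diff hopen hdiff, ?_⟩, ?_, ?_⟩
  · intro z hz
    exact HMaj.lap_re_eq_zero hopen hdiff hz
  · intro z hz
    have hz1 : ‖z‖ < 1 := by simpa [unitDisc, Metric.mem_ball] using hz
    show 0 ≤ (Fc z).re
    rw [hre z hz]
    have : 0 ≤ ∫ t, HMaj.pK z (Complex.exp (t * Complex.I)) ∂μ :=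
      integral_nonneg fun t => HMaj.pK_nonneg hz1 _
    linarith
  · intro z hz
    show φ z ≤ (Fc z).re
    have hz1 : ‖z‖ < 1 := by simpa [unitDisc, Metric.mem_ball] using hz
    obtain ⟨n, k, hk, hzW⟩ := HMaj.exists_whitney_mem hz
    have hP : (0:ℝ) < 2 ^ n := by positivity
    -- finiteness of supWhitney
    have hwtle : HMaj.wt φ (n, k) ≤ ENNReal.ofReal C := by
      have h := hC' {(n, k)} (by simp [hk]) (by simp)
      simpa using h
    have hwt_ne : HMaj.wt φ (n, k) ≠ ⊤ :=
      ne_top_of_le_ne_top ENNReal.ofReal_ne_top hwtle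
    have hofr_pos : ENNReal.ofReal ((2:ℝ) ^ (-(n:ℝ))) ≠ 0 := by
      rw [ne_eq, ENNReal.ofReal_eq_zero, not_le]
      positivity
    have hfin : supWhitney φ n k ≠ ⊤ := by
      intro htop
      rw [HMaj.wt, htop, ENNReal.top_mul hofr_pos] at hwt_ne
      exact hwt_ne rfl
    have hφle : φ z ≤ (supWhitney φ n k).toReal := by
      have h1 : ENNReal.ofReal (φ z) ≤ supWhitney φ n k := by
        rw [supWhitney]
        exact le_iSup₂ (f := fun (w : ℂ) (_ : w ∈ whitney n k) => ENNReal.ofReal (φ w)) z hzW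
      have h2 := ENNReal.toReal_mono hfin h1
      rwa [ENNReal.toReal_ofReal (hpos z hz)] at h2
    -- integral lower bound
    have hIcc := HMaj.nu_Icc_ge hC' (p := (n,k)) hk
    have hInt := HMaj.integrable_pK μ hz1
    have hlow : ∀ t ∈ Icc (HMaj.arcLB (n,k)) (HMaj.arcUB (n,k)),
        (2:ℝ)^n / 128 ≤ HMaj.pK z (Complex.exp (t * Complex.I)) :=
      fun t ht => HMaj.pK_lower hzW ht
    have c1 : (2:ℝ)^n / 128 * (μ (Icc (HMaj.arcLB (n,k)) (HMaj.arcUB (n,k)))).toReal ≤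
        ∫ t in Icc (HMaj.arcLB (n,k)) (HMaj.arcUB (n,k)), HMaj.pK z (Complex.exp (t * Complex.I)) ∂μ :=
      by have h := setIntegral_ge_of_const_le measurableSet_Icc (measure_ne_top μ _) hlow hInt.integrableOn
         rwa [smul_eq_mul, mul_comm] at h
    have c2 : (∫ t in Icc (HMaj.arcLB (n,k)) (HMaj.arcUB (n,k)), HMaj.pK z (Complex.exp (t * Complex.I)) ∂μ)
        ≤ ∫ t, HMaj.pK z (Complex.exp (t * Complex.I)) ∂μ := by
      apply setIntegral_le_integral hInt
      filter_upwards with t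
      exact HMaj.pK_nonneg hz1 _
    have c3 : (HMaj.wt φ (n,k)).toReal ≤ (μ (Icc (HMaj.arcLB (n,k)) (HMaj.arcUB (n,k)))).toReal := by
      have := ENNReal.toReal_mono (measure_ne_top μ _) hIcc
      rwa [ENNReal.toReal_ofReal ENNReal.toReal_nonneg] at this
    have c4 : (HMaj.wt φ (n,k)).toReal = (supWhitney φ n k).toReal * ((2:ℝ)^n)⁻¹ := by
      rw [HMaj.wt, ENNReal.toReal_mul, ENNReal.toReal_ofReal (by positivity), HMaj.two_rpow_neg_nat]
    have key : (supWhitney φ n k).toReal ≤ 128 * ∫ t, HMaj.pK z (Complex.exp (t * Complex.I)) ∂μ := by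
      have e1 : (2:ℝ)^n / 128 * ((supWhitney φ n k).toReal * ((2:ℝ)^n)⁻¹)
          = (supWhitney φ n k).toReal / 128 := by
        field_simp
      have h5 : (2:ℝ)^n / 128 * (HMaj.wt φ (n,k)).toReal ≤
          (2:ℝ)^n / 128 * (μ (Icc (HMaj.arcLB (n,k)) (HMaj.arcUB (n,k)))).toReal :=
        mul_le_mul_of_nonneg_left c3 (by positivity)
      rw [c4, e1] at h5
      linarith
    rw [hre z hz]
    linarith
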